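/- Let α ∈ ℝ^{e×d} (e ≥ d ≥ 1) be a non-degenerate coefficient matrix and let σ be an invertible affine transformation of ℝ^d. (i) If σ is α-compatible, then σ(P^α_m) = P^α_{σ(m)} for every constraint matrix m. (ii) If σ is α-compatible and the diagonal matrix A in the compatibility relation equals a·Id for some a ∈ ℝ \ {0}, then O ∘ σ = σ ∘ O on constraint matrices, where O is the associated optimization map. -/
import Mathlib


open Set

/-- A constraint matrix: a pair of vectors of lower and upper bounds in `ℝ^e`. -/
abbrev CM (e : ℕ) := (Fin e → ℝ) × (Fin e → ℝ)

/-- The open polytope `P^α_m` associated with a coefficient matrix `α` and a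
constraint matrix `m`. -/
def PolySet {e d : ℕ} (α : Matrix (Fin e) (Fin d) ℝ) (m : CM e) : Set (Fin d → ℝ) :=
  {x | ∀ i, m.1 i < α.mulVec x i ∧ α.mulVec x i < m.2 i}

/-- A coefficient matrix is non-degenerate if its rows are nonzero and
pairwise non-proportional. -/
def Nondeg {e d : ℕ} (α : Matrix (Fin e) (Fin d) ℝ) : Prop :=
  (∀ i, α i ≠ 0) ∧ ∀ i j : Fin e, i ≠ j → ∀ c : ℝ, α i ≠ c • α j

/-- The set `Λ_i`: vectors `λ ∈ ℝ^e` supported on some `S` with `|S| ≤ d` which are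
the unique solution of `λᵀ α = α_i` with support in `S`. -/
def Lambda {e d : ℕ} (α : Matrix (Fin e) (Fin d) ℝ) (i : Fin e) : Set (Fin e → ℝ) :=
  {l | ∃ S : Finset (Fin e), S.card ≤ d ∧ (∀ k ∉ S, l k = 0) ∧
        (∀ j, ∑ k, l k * α k j = α i j) ∧
        ∀ l' : Fin e → ℝ, (∀ k ∉ S, l' k = 0) → (∀ j, ∑ k, l' k * α k j = α i j) → l' = l}

/-- `e̲_k(a,m)` -/
noncomputable def eLow {e : ℕ} (a : ℝ) (m : CM e) (k : Fin e) : ℝ :=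
  if 0 ≤ a then m.1 k else m.2 k

/-- `ē_k(a,m)` -/
noncomputable def eHigh {e : ℕ} (a : ℝ) (m : CM e) (k : Fin e) : ℝ :=
  if 0 ≤ a then m.2 k else m.1 k

/-- The optimized constraint matrix `O(m)`. -/
noncomputable def Opt {e d : ℕ} (α : Matrix (Fin e) (Fin d) ℝ) (m : CM e) : CM e :=
  (fun i => sSup ((fun l : Fin e → ℝ => ∑ k, l k * eLow (l k) m k) '' Lambda α i),
   fun i => sInf ((fun l : Fin e → ℝ => ∑ k, l k * eHigh (l k) m k) '' Lambda α i))

/-- Intersection constraint matrix `m ∩ m'`. -/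
def interCM {e : ℕ} (m m' : CM e) : CM e :=
  (fun i => max (m.1 i) (m'.1 i), fun i => min (m.2 i) (m'.2 i))

/-- Constraint-matrix inclusion `m ⊂ m'`. -/
def cmSub {e : ℕ} (m m' : CM e) : Prop := ∀ i, m'.1 i ≤ m.1 i ∧ m.2 i ≤ m'.2 i

/-- `σ` is `α`-compatible with data `(a, π, B)`: `α(σx) = A π (αx) + B` where
`A = diag(a)` with nonzero entries and `π` permutes coordinates. -/
def IsCompatData {e d : ℕ} (α : Matrix (Fin e) (Fin d) ℝ)
    (σ : (Fin d → ℝ) ≃ᵃ[ℝ] (Fin d → ℝ))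
    (a : Fin e → ℝ) (π : Equiv.Perm (Fin e)) (B : Fin e → ℝ) : Prop :=
  (∀ i, a i ≠ 0) ∧
  ∀ (x : Fin d → ℝ) (i : Fin e), α.mulVec (σ x) i = a i * α.mulVec x (π i) + B i

/-- The transformation induced on constraint matrices by an `α`-compatible `σ`
with data `(a, π, B)`. -/
noncomputable def cmMap {e : ℕ} (a : Fin e → ℝ) (π : Equiv.Perm (Fin e)) (B : Fin e → ℝ)
    (m : CM e) : CM e :=
  (fun i => if 0 < a i then a i * m.1 (π i) + B i else a i * m.2 (π i) + B i,
   fun i => if 0 < a i then a i * m.2 (π i) + B i else a i * m.1 (π i) + B i)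

lemma row_iff {e d : ℕ} (α : Matrix (Fin e) (Fin d) ℝ) (v : Fin e → ℝ) (i : Fin e) :
    (∀ j, ∑ k, v k * α k j = α i j) ↔
    (∀ x : Fin d → ℝ, ∑ k, v k * α.mulVec x k = α.mulVec x i) := by
  constructor
  · intro h x
    simp only [Matrix.mulVec, dotProduct]
    simp_rw [Finset.mul_sum]
    rw [Finset.sum_comm]
    refine Finset.sum_congr rfl fun j _ => ?_
    simp_rw [← mul_assoc]
    rw [← Finset.sum_mul, h j]
  · intro h j
    have := h (Pi.single j 1)
    simpa [Matrix.mulVec_single] using this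

lemma row_iff' {e d : ℕ} (α : Matrix (Fin e) (Fin d) ℝ) (π : Equiv.Perm (Fin e))
    (v : Fin e → ℝ) (i : Fin e) :
    (∀ j, ∑ k, v k * α (π k) j = α (π i) j) ↔
    (∀ x : Fin d → ℝ, ∑ k, v k * α.mulVec x (π k) = α.mulVec x (π i)) := by
  have h := row_iff (Matrix.of fun k j => α (π k) j) v i
  exact h

lemma rel_iff {e d : ℕ} (α : Matrix (Fin e) (Fin d) ℝ) (π : Equiv.Perm (Fin e)) (c : ℝ)
    (hc : c ≠ 0) (M : (Fin d → ℝ) ≃ₗ[ℝ] (Fin d → ℝ))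
    (hM : ∀ (x : Fin d → ℝ) (i : Fin e), α.mulVec (M x) i = c * α.mulVec x (π i))
    (v : Fin e → ℝ) (i : Fin e) :
    (∀ j, ∑ k, v k * α k j = α i j) ↔ (∀ j, ∑ k, v k * α (π k) j = α (π i) j) := by
  rw [row_iff, row_iff']
  constructor
  · intro h x
    apply mul_left_cancel₀ hc
    calc c * ∑ k, v k * α.mulVec x (π k) = ∑ k, v k * (c * α.mulVec x (π k)) := by
          rw [Finset.mul_sum]; exact Finset.sum_congr rfl fun k _ => by ring
      _ = ∑ k, v k * α.mulVec (M x) k := by simp_rw [hM]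
      _ = α.mulVec (M x) i := h (M x)
      _ = c * α.mulVec x (π i) := hM x i
  · intro h y
    have hy : y = M (M.symm y) := (M.apply_symm_apply y).symm
    rw [hy]
    calc ∑ k, v k * α.mulVec (M (M.symm y)) k
        = ∑ k, v k * (c * α.mulVec (M.symm y) (π k)) := by simp_rw [hM]
      _ = c * ∑ k, v k * α.mulVec (M.symm y) (π k) := by
          rw [Finset.mul_sum]; exact Finset.sum_congr rfl fun k _ => by ring
      _ = c * α.mulVec (M.symm y) (π i) := by rw [h]
      _ = α.mulVec (M (M.symm y)) i := (hM _ i).symm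

lemma mem_lambda_comp {e d : ℕ} (α : Matrix (Fin e) (Fin d) ℝ) (π : Equiv.Perm (Fin e)) (c : ℝ)
    (hc : c ≠ 0) (M : (Fin d → ℝ) ≃ₗ[ℝ] (Fin d → ℝ))
    (hM : ∀ (x : Fin d → ℝ) (i : Fin e), α.mulVec (M x) i = c * α.mulVec x (π i))
    {i : Fin e} {μ : Fin e → ℝ} (hμ : μ ∈ Lambda α (π i)) : μ ∘ π ∈ Lambda α i := by
  obtain ⟨T, hTcard, hTsupp, hTsum, hTuniq⟩ := hμ
  refine ⟨T.image π.symm, ?_, ?_, ?_, ?_⟩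
  · rwa [Finset.card_image_of_injective _ π.symm.injective]
  · intro k hk
    have : π k ∉ T := fun h => hk (by simpa using Finset.mem_image_of_mem π.symm h)
    exact hTsupp _ this
  · rw [rel_iff α π c hc M hM]
    intro j
    calc ∑ k, (μ ∘ π) k * α (π k) j = ∑ k, μ k * α k j :=
          Equiv.sum_comp π (fun k => μ k * α k j)
      _ = α (π i) j := hTsum j
  · intro l' hsupp' hsum'
    have hsupp'' : ∀ k ∉ T, (l' ∘ π.symm) k = 0 := by
      intro k hk
      apply hsupp'
      intro hmem
      obtain ⟨t, ht, hteq⟩ := Finset.mem_image.1 hmem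
      exact hk (π.symm.injective hteq ▸ ht)
    have hsum'' : ∀ j, ∑ k, (l' ∘ π.symm) k * α k j = α (π i) j := by
      intro j
      have h1 : ∀ j, ∑ k, l' k * α (π k) j = α (π i) j :=
        (rel_iff α π c hc M hM l' i).1 hsum'
      calc ∑ k, (l' ∘ π.symm) k * α k j
          = ∑ k, l' k * α (π k) j := by
            rw [← Equiv.sum_comp π (fun k => (l' ∘ π.symm) k * α k j)]
            simp
        _ = α (π i) j := h1 j
    have := hTuniq _ hsupp'' hsum''
    funext k
    have h2 : (l' ∘ π.symm) (π k) = μ (π k) := by rw [this]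
    simpa using h2

lemma lambda_nonempty {e d : ℕ} (hd : 1 ≤ d) (α : Matrix (Fin e) (Fin d) ℝ) (i : Fin e)
    (hα : α i ≠ 0) : (Lambda α i).Nonempty := by
  refine ⟨Pi.single i 1, {i}, by simpa using hd, ?_, ?_, ?_⟩
  · intro k hk
    exact Pi.single_eq_of_ne (by simpa using hk) 1
  · intro j
    rw [Finset.sum_eq_single i]
    · simp
    · intro k _ hk; simp [Pi.single_eq_of_ne hk]
    · simp
  · intro l' hsupp hsum
    obtain ⟨j, hj⟩ := Function.ne_iff.1 hα
    have h1 : l' i * α i j = α i j := by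
      have := hsum j
      rwa [Finset.sum_eq_single i (fun k _ hk => by simp [hsupp k (by simpa using hk)])
        (by simp)] at this
    have h2 : l' i = 1 := by
      have h3 : (l' i - 1) * α i j = 0 := by rw [sub_mul, one_mul, h1, sub_self]
      rcases mul_eq_zero.1 h3 with h | h
      · linarith
      · exact absurd h hj
    funext k
    by_cases hk : k = i
    · subst hk; simp [h2]
    · simp [hsupp k (by simpa using hk), Pi.single_eq_of_ne hk]

lemma lambda_finite {e d : ℕ} (α : Matrix (Fin e) (Fin d) ℝ) (i : Fin e) :
    (Lambda α i).Finite := by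
  have hsub : Lambda α i ⊆ ⋃ S : Finset (Fin e),
      {l : Fin e → ℝ | (∀ k ∉ S, l k = 0) ∧ (∀ j, ∑ k, l k * α k j = α i j) ∧
        ∀ l' : Fin e → ℝ, (∀ k ∉ S, l' k = 0) → (∀ j, ∑ k, l' k * α k j = α i j) → l' = l} := by
    rintro l ⟨S, _, h1, h2, h3⟩
    exact Set.mem_iUnion.2 ⟨S, h1, h2, h3⟩
  refine Set.Finite.subset (Set.finite_iUnion fun S => ?_) hsub
  apply Set.Subsingleton.finite
  intro x hx y hy
  exact hy.2.2 x hx.1 hx.2.1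

lemma csSup_affine_pos (c b : ℝ) (hc : 0 < c) (S : Set ℝ) (hfin : S.Finite) (hne : S.Nonempty) :
    sSup ((fun x => c * x + b) '' S) = c * sSup S + b := by
  have hg : IsGreatest S (sSup S) := ⟨hne.csSup_mem hfin, fun x hx => le_csSup hfin.bddAbove hx⟩
  refine IsGreatest.csSup_eq ⟨⟨sSup S, hg.1, rfl⟩, ?_⟩
  rintro y ⟨x, hx, rfl⟩
  have := hg.2 hx
  dsimp only
  nlinarith

lemma csSup_affine_neg (c b : ℝ) (hc : c < 0) (S : Set ℝ) (hfin : S.Finite) (hne : S.Nonempty) :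
    sSup ((fun x => c * x + b) '' S) = c * sInf S + b := by
  have hg : IsLeast S (sInf S) := ⟨hne.csInf_mem hfin, fun x hx => csInf_le hfin.bddBelow hx⟩
  refine IsGreatest.csSup_eq ⟨⟨sInf S, hg.1, rfl⟩, ?_⟩
  rintro y ⟨x, hx, rfl⟩
  have := hg.2 hx
  dsimp only
  nlinarith

lemma csInf_affine_pos (c b : ℝ) (hc : 0 < c) (S : Set ℝ) (hfin : S.Finite) (hne : S.Nonempty) :
    sInf ((fun x => c * x + b) '' S) = c * sInf S + b := by
  have hg : IsLeast S (sInf S) := ⟨hne.csInf_mem hfin, fun x hx => csInf_le hfin.bddBelow hx⟩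
  refine IsLeast.csInf_eq ⟨⟨sInf S, hg.1, rfl⟩, ?_⟩
  rintro y ⟨x, hx, rfl⟩
  have := hg.2 hx
  dsimp only
  nlinarith

lemma csInf_affine_neg (c b : ℝ) (hc : c < 0) (S : Set ℝ) (hfin : S.Finite) (hne : S.Nonempty) :
    sInf ((fun x => c * x + b) '' S) = c * sSup S + b := by
  have hg : IsGreatest S (sSup S) := ⟨hne.csSup_mem hfin, fun x hx => le_csSup hfin.bddAbove hx⟩
  refine IsLeast.csInf_eq ⟨⟨sSup S, hg.1, rfl⟩, ?_⟩
  rintro y ⟨x, hx, rfl⟩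
  have := hg.2 hx
  dsimp only
  nlinarith


lemma sum_transform {e : ℕ} (π : Equiv.Perm (Fin e)) (c : ℝ) (B : Fin e → ℝ) (μ : Fin e → ℝ)
    (E E' : ℝ → Fin e → ℝ) (hE : ∀ t k, E t k = c * E' t (π k) + B k) (b : ℝ)
    (hBsum : ∑ k, μ (π k) * B k = b) :
    ∑ k, (μ ∘ π) k * E ((μ ∘ π) k) k = c * (∑ k, μ k * E' (μ k) k) + b := by
  calc ∑ k, (μ ∘ π) k * E ((μ ∘ π) k) k
      = ∑ k, (c * (μ (π k) * E' (μ (π k)) (π k)) + μ (π k) * B k) := by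
        refine Finset.sum_congr rfl fun k _ => ?_
        rw [Function.comp_apply, hE]; ring
    _ = c * (∑ k, μ (π k) * E' (μ (π k)) (π k)) + ∑ k, μ (π k) * B k := by
        rw [Finset.sum_add_distrib, Finset.mul_sum]
    _ = _ := by rw [hBsum, Equiv.sum_comp π (fun k => μ k * E' (μ k) k)]

/-- (i) an `α`-compatible `σ` maps `P^α_m` onto `P^α_{σ(m)}`;
(ii) if moreover `A = a·Id`, then `O ∘ σ = σ ∘ O`. -/
theorem statement_4 {d e : ℕ} (hd : 1 ≤ d) (hde : d ≤ e)
    (α : Matrix (Fin e) (Fin d) ℝ) (hα : Nondeg α)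
    (σ : (Fin d → ℝ) ≃ᵃ[ℝ] (Fin d → ℝ))
    (a : Fin e → ℝ) (π : Equiv.Perm (Fin e)) (B : Fin e → ℝ)
    (hc : IsCompatData α σ a π B) :
    (∀ m : CM e, ⇑σ '' PolySet α m = PolySet α (cmMap a π B m)) ∧
    ((∃ c : ℝ, c ≠ 0 ∧ ∀ i, a i = c) →
      ∀ m : CM e, Opt α (cmMap a π B m) = cmMap a π B (Opt α m)) := by
  obtain ⟨ha, hcomp⟩ := hc
  constructor
  · intro m
    ext y
    constructor
    · rintro ⟨x, hx, rfl⟩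
      intro i
      have h := hcomp x i
      have hx' := hx (π i)
      simp only [cmMap]
      rcases (ha i).lt_or_gt with hneg | hpos
      · rw [if_neg (by linarith), if_neg (by linarith)]
        constructor <;> nlinarith [hx'.1, hx'.2]
      · rw [if_pos hpos, if_pos hpos]
        constructor <;> nlinarith [hx'.1, hx'.2]
    · intro hy
      refine ⟨σ.symm y, fun i => ?_, σ.apply_symm_apply y⟩
      have h := hcomp (σ.symm y) (π.symm i)
      rw [AffineEquiv.apply_symm_apply, Equiv.apply_symm_apply] at h
      have hy' := hy (π.symm i)
      simp only [cmMap, Equiv.apply_symm_apply] at hy'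
      rw [h] at hy'
      rcases (ha (π.symm i)).lt_or_gt with hneg | hpos
      · rw [if_neg (by linarith), if_neg (by linarith)] at hy'
        constructor <;> nlinarith [hy'.1, hy'.2]
      · rw [if_pos hpos, if_pos hpos] at hy'
        constructor <;> nlinarith [hy'.1, hy'.2]
  · rintro ⟨c, hc0, hac⟩ m
    have hσ : ∀ x : Fin d → ℝ, σ x = σ.linear x + σ 0 := by
      intro x
      have := σ.toAffineMap.map_vadd (0 : Fin d → ℝ) x
      simpa [vadd_eq_add] using this
    have hB : ∀ i, B i = α.mulVec (σ 0) i := by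
      intro i
      have := hcomp 0 i
      simp only [Matrix.mulVec_zero, Pi.zero_apply, mul_zero, zero_add] at this
      exact this.symm
    have hM : ∀ (x : Fin d → ℝ) (i : Fin e), α.mulVec (σ.linear x) i = c * α.mulVec x (π i) := by
      intro x i
      have h1 := hcomp x i
      rw [hσ x] at h1
      have h2 : α.mulVec (σ.linear x + σ 0) i = α.mulVec (σ.linear x) i + α.mulVec (σ 0) i := by
        rw [Matrix.mulVec_add]; rfl
      rw [h2, ← hB i, hac i] at h1
      linarith
    have hM' : ∀ (x : Fin d → ℝ) (i' : Fin e),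
        α.mulVec (σ.linear.symm x) i' = c⁻¹ * α.mulVec x (π.symm i') := by
      intro x i'
      have h3 := hM (σ.linear.symm x) (π.symm i')
      rw [LinearEquiv.apply_symm_apply, Equiv.apply_symm_apply] at h3
      rw [h3]
      field_simp
    have hLam : ∀ i, Lambda α i = (fun l : Fin e → ℝ => l ∘ π) '' Lambda α (π i) := by
      intro i
      ext l
      constructor
      · intro hl
        refine ⟨l ∘ π.symm, ?_, by funext k; simp⟩
        have hl' : l ∈ Lambda α (π.symm (π i)) := by rwa [Equiv.symm_apply_apply]
        exact mem_lambda_comp α π.symm c⁻¹ (inv_ne_zero hc0) σ.linear.symm hM' hl'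
      · rintro ⟨μ, hμ, rfl⟩
        exact mem_lambda_comp α π c hc0 σ.linear hM hμ
    have hBsum : ∀ i, ∀ μ ∈ Lambda α (π i), ∑ k, μ (π k) * B k = B i := by
      intro i μ hμ
      obtain ⟨S, _, _, hsum, _⟩ := mem_lambda_comp α π c hc0 σ.linear hM hμ
      have h4 := (row_iff α (μ ∘ π) i).1 hsum (σ 0)
      simp only [Function.comp_apply] at h4
      simp_rw [hB]
      exact h4
    set m' := cmMap a π B m with hm'
    have hne : ∀ i : Fin e, (Lambda α i).Nonempty := fun i => lambda_nonempty hd α i (hα.1 i)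
    have hfin : ∀ i : Fin e, (Lambda α i).Finite := fun i => lambda_finite α i
    rcases hc0.lt_or_gt with hneg | hpos
    · -- c < 0
      have hE1 : ∀ (t : ℝ) (k : Fin e),
          eLow t m' k = c * eHigh t m (π k) + B k := by
        intro t k
        simp only [eLow, eHigh, hm', cmMap, hac]
        split_ifs <;> first | ring1 | linarith
      have hE2 : ∀ (t : ℝ) (k : Fin e),
          eHigh t m' k = c * eLow t m (π k) + B k := by
        intro t k
        simp only [eLow, eHigh, hm', cmMap, hac]
        split_ifs <;> first | ring1 | linarith
      refine Prod.ext (funext fun i => ?_) (funext fun i => ?_)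
      · have himg : (fun l : Fin e → ℝ => ∑ k, l k * eLow (l k) m' k) '' Lambda α i
            = (fun t => c * t + B i) ''
              ((fun l : Fin e → ℝ => ∑ k, l k * eHigh (l k) m k) '' Lambda α (π i)) := by
          rw [hLam i, Set.image_image, Set.image_image]
          refine Set.image_congr fun μ hμ => ?_
          exact sum_transform π c B μ (fun t k => eLow t m' k) (fun t k => eHigh t m k)
            hE1 (B i) (hBsum i μ hμ)
        show sSup _ = _
        rw [himg, csSup_affine_neg c (B i) hneg _ ((hfin (π i)).image _) ((hne (π i)).image _)]
        simp only [cmMap, Opt, hac]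
        rw [if_neg (by linarith)]
      · have himg : (fun l : Fin e → ℝ => ∑ k, l k * eHigh (l k) m' k) '' Lambda α i
            = (fun t => c * t + B i) ''
              ((fun l : Fin e → ℝ => ∑ k, l k * eLow (l k) m k) '' Lambda α (π i)) := by
          rw [hLam i, Set.image_image, Set.image_image]
          refine Set.image_congr fun μ hμ => ?_
          exact sum_transform π c B μ (fun t k => eHigh t m' k) (fun t k => eLow t m k)
            hE2 (B i) (hBsum i μ hμ)
        show sInf _ = _
        rw [himg, csInf_affine_neg c (B i) hneg _ ((hfin (π i)).image _) ((hne (π i)).image _)]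
        simp only [cmMap, Opt, hac]
        rw [if_neg (by linarith)]
    · -- 0 < c
      have hE1 : ∀ (t : ℝ) (k : Fin e),
          eLow t m' k = c * eLow t m (π k) + B k := by
        intro t k
        simp only [eLow, hm', cmMap, hac]
        split_ifs <;> first | ring1 | linarith
      have hE2 : ∀ (t : ℝ) (k : Fin e),
          eHigh t m' k = c * eHigh t m (π k) + B k := by
        intro t k
        simp only [eHigh, hm', cmMap, hac]
        split_ifs <;> first | ring1 | linarith
      refine Prod.ext (funext fun i => ?_) (funext fun i => ?_)
      · have himg : (fun l : Fin e → ℝ => ∑ k, l k * eLow (l k) m' k) '' Lambda α i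
            = (fun t => c * t + B i) ''
              ((fun l : Fin e → ℝ => ∑ k, l k * eLow (l k) m k) '' Lambda α (π i)) := by
          rw [hLam i, Set.image_image, Set.image_image]
          refine Set.image_congr fun μ hμ => ?_
          exact sum_transform π c B μ (fun t k => eLow t m' k) (fun t k => eLow t m k)
            hE1 (B i) (hBsum i μ hμ)
        show sSup _ = _
        rw [himg, csSup_affine_pos c (B i) hpos _ ((hfin (π i)).image _) ((hne (π i)).image _)]
        simp only [cmMap, Opt, hac]
        rw [if_pos hpos]
      · have himg : (fun l : Fin e → ℝ => ∑ k, l k * eHigh (l k) m' k) '' Lambda α i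
            = (fun t => c * t + B i) ''
              ((fun l : Fin e → ℝ => ∑ k, l k * eHigh (l k) m k) '' Lambda α (π i)) := by
          rw [hLam i, Set.image_image, Set.image_image]
          refine Set.image_congr fun μ hμ => ?_
          exact sum_transform π c B μ (fun t k => eHigh t m' k) (fun t k => eHigh t m k)
            hE2 (B i) (hBsum i μ hμ)
        show sInf _ = _
        rw [himg, csInf_affine_pos c (B i) hpos _ ((hfin (π i)).image _) ((hne (π i)).image _)]
        simp only [cmMap, Opt, hac]
        rw [if_pos hpos]
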